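/- (Lemma 3 of the appendix.) Let m+2 ≤ i ≤ n and, for each j = i−m−1, i−m, …, i, let x_j be a vector of k distinct locations of column j. Then H(Z_{x_{i−m−1}} | Z_{x_{i−m:i−1}}) − H(Z_{x_{i−m−1}} | Z_{x_{i−m:i−1}}, Z_{x_i}) ≤ k² · log(1 + ξ²/(η(1+η))). -/

import Mathlib

open Finset

/-- Covariance matrix of the GP: kernel plus sensor noise on the diagonal. -/
noncomputable def SigmaMat {D : Type*} [DecidableEq D] (K : D → D → ℝ) (σn2 : ℝ) :
    Matrix D D ℝ :=
  Matrix.of fun x y => K x y + if x = y then σn2 else 0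

/-- Submatrix of covariances between the entries of two finsets of locations. -/
noncomputable def subMat {D : Type*} (Cov : Matrix D D ℝ) (a s : Finset D) :
    Matrix ↥a ↥s ℝ :=
  Matrix.of fun p q => Cov p.1 q.1

/-- Posterior covariance `Σ_{aa|s} = Σ_{aa} - Σ_{as} Σ_{ss}⁻¹ Σ_{sa}`. -/
noncomputable def postCov {D : Type*} [DecidableEq D] (Cov : Matrix D D ℝ) (a s : Finset D) :
    Matrix ↥a ↥a ℝ :=
  subMat Cov a a - subMat Cov a s * (subMat Cov s s)⁻¹ * subMat Cov s a

/-- Gaussian conditional entropy `H(Z_a | Z_s) = (1/2) log((2πe)^{|a|} det Σ_{aa|s})`. -/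
noncomputable def condEnt {D : Type*} [DecidableEq D] (Cov : Matrix D D ℝ) (a s : Finset D) : ℝ :=
  (1/2) * Real.log ((2 * Real.pi * Real.exp 1) ^ a.card * (postCov Cov a s).det)

/-- Gaussian joint entropy `H(Z_a)`. -/
noncomputable def ent {D : Type*} [DecidableEq D] (Cov : Matrix D D ℝ) (a : Finset D) : ℝ :=
  condEnt Cov a ∅

/-- Mutual information `I(Z_a ; Z_b) = H(Z_a) - H(Z_a | Z_b)`. -/
noncomputable def mutInf {D : Type*} [DecidableEq D] (Cov : Matrix D D ℝ) (a b : Finset D) : ℝ :=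
  ent Cov a - condEnt Cov a b

/-- Conditional mutual information `I(Z_a ; Z_b | Z_s) = H(Z_a | Z_s) - H(Z_a | Z_s, Z_b)`. -/
noncomputable def condMutInf {D : Type*} [DecidableEq D] (Cov : Matrix D D ℝ)
    (a b s : Finset D) : ℝ :=
  condEnt Cov a s - condEnt Cov a (s ∪ b)

/-- Posterior variance `Σ_{yy|A}` of a single location `y`. -/
noncomputable def postVar {D : Type*} [DecidableEq D] (Cov : Matrix D D ℝ) (y : D)
    (A : Finset D) : ℝ :=
  postCov Cov {y} A ⟨y, Finset.mem_singleton_self y⟩ ⟨y, Finset.mem_singleton_self y⟩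

/-- Concatenation `x_{i:j}` of the column selections from column `i` to column `j`. -/
def seg {D : Type*} [DecidableEq D] (x : ℕ → Finset D) (i j : ℕ) : Finset D :=
  (Finset.Icc i j).biUnion x

/-- The set of the `r` locations of column `i`. -/
def column {D : Type*} [Fintype D] (col : D → ℕ) (i : ℕ) : Finset D :=
  Finset.univ.filter (fun p => col p = i)

/-- The complementary vector `u_i` of unobserved locations of column `i` for a path `x`. -/
def ucomp {D : Type*} [Fintype D] [DecidableEq D] (col : D → ℕ) (x : ℕ → Finset D) :
    ℕ → Finset D :=
  fun i => column col i \ x i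

/-- A path selects, in every column `i = 1,…,n`, a vector of `k` distinct locations of
column `i`. -/
def IsPath {D : Type*} [Fintype D] (col : D → ℕ) (n k : ℕ) (x : ℕ → Finset D) : Prop :=
  ∀ i, 1 ≤ i → i ≤ n → x i ⊆ column col i ∧ (x i).card = k

set_option linter.unusedSectionVars false

namespace Aux
open Matrix
variable {D : Type*} [Fintype D] [DecidableEq D]

def sumEquiv (a s : Finset D) (h : Disjoint a s) : (↥a ⊕ ↥s) ≃ ↥(a ∪ s) where
  toFun := Sum.elim (fun p => ⟨p.1, Finset.mem_union_left _ p.2⟩)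
    (fun p => ⟨p.1, Finset.mem_union_right _ p.2⟩)
  invFun p := if hp : p.1 ∈ a then Sum.inl ⟨p.1, hp⟩
    else Sum.inr ⟨p.1, (Finset.mem_union.1 p.2).resolve_left hp⟩
  left_inv := by
    rintro (⟨p, hp⟩ | ⟨p, hp⟩)
    · simp [hp]
    · have : p ∉ a := fun hpa => (Finset.disjoint_left.1 h) hpa hp
      simp [this]
  right_inv := by
    rintro ⟨p, hp⟩
    by_cases hpa : p ∈ a <;> simp [hpa]

lemma subMat_union (Cov : Matrix D D ℝ) (a s : Finset D) (h : Disjoint a s) :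
    (subMat Cov (a ∪ s) (a ∪ s)).submatrix (sumEquiv a s h) (sumEquiv a s h) =
      Matrix.fromBlocks (subMat Cov a a) (subMat Cov a s) (subMat Cov s a) (subMat Cov s s) := by
  ext i j
  cases i <;> cases j <;> rfl

variable {Cov : Matrix D D ℝ} {σn2 : ℝ}

lemma subMat_sub_psd (hpsd : (Cov - σn2 • 1).PosSemidef) (t : Finset D) :
    (subMat Cov t t - σn2 • (1 : Matrix ↥t ↥t ℝ)).PosSemidef := by
  have he : subMat Cov t t - σn2 • (1 : Matrix ↥t ↥t ℝ) =
      (Cov - σn2 • 1).submatrix (Subtype.val) (Subtype.val) := by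
    ext p q
    simp only [subMat, Matrix.sub_apply, Matrix.smul_apply, Matrix.submatrix_apply, Matrix.of_apply,
      Matrix.one_apply, Subtype.ext_iff]
  rw [he]
  exact hpsd.submatrix _

lemma subMat_posDef (hn : 0 < σn2) (hpsd : (Cov - σn2 • 1).PosSemidef) (t : Finset D) :
    (subMat Cov t t).PosDef := by
  have h1 : (σn2 • (1 : Matrix ↥t ↥t ℝ)).PosDef := by
    have : (σn2 • (1 : Matrix ↥t ↥t ℝ)) = Matrix.diagonal (fun _ => σn2) := by
      ext p q
      by_cases h : p = q <;> simp [Matrix.one_apply, Matrix.diagonal, h]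
    rw [this]
    exact Matrix.PosDef.diagonal (fun _ => hn)
  have h2 := Matrix.PosDef.posSemidef_add (subMat_sub_psd hpsd t) h1
  simpa using h2

lemma det_subMat_pos (hn : 0 < σn2) (hpsd : (Cov - σn2 • 1).PosSemidef) (t : Finset D) :
    0 < (subMat Cov t t).det :=
  (subMat_posDef hn hpsd t).det_pos

noncomputable def invSub (hn : 0 < σn2) (hpsd : (Cov - σn2 • 1).PosSemidef) (t : Finset D) :
    Invertible (subMat Cov t t) :=
  (subMat Cov t t).invertibleOfIsUnitDet (isUnit_iff_ne_zero.2 (det_subMat_pos hn hpsd t).ne')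

lemma schur_det (hn : 0 < σn2) (hpsd : (Cov - σn2 • 1).PosSemidef) {a s : Finset D}
    (h : Disjoint a s) :
    (subMat Cov (a ∪ s) (a ∪ s)).det = (subMat Cov s s).det * (postCov Cov a s).det := by
  haveI := invSub hn hpsd s
  have h1 := Matrix.det_submatrix_equiv_self (sumEquiv a s h) (subMat Cov (a ∪ s) (a ∪ s))
  rw [subMat_union Cov a s h] at h1
  rw [← h1, Matrix.det_fromBlocks₂₂, invOf_eq_nonsing_inv]
  rfl

lemma det_postCov_pos (hn : 0 < σn2) (hpsd : (Cov - σn2 • 1).PosSemidef) {a s : Finset D}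
    (h : Disjoint a s) : 0 < (postCov Cov a s).det := by
  have h1 := schur_det hn hpsd h
  have h2 := det_subMat_pos hn hpsd (a ∪ s)
  have h3 := det_subMat_pos hn hpsd s
  nlinarith

/-- log-det of the covariance submatrix. -/
noncomputable def Lf (Cov : Matrix D D ℝ) (t : Finset D) : ℝ :=
  Real.log (subMat Cov t t).det

lemma log_det_postCov (hn : 0 < σn2) (hpsd : (Cov - σn2 • 1).PosSemidef) {a s : Finset D}
    (h : Disjoint a s) :
    Real.log (postCov Cov a s).det = Lf Cov (a ∪ s) - Lf Cov s := by
  have h1 := schur_det hn hpsd h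
  have h3 := det_subMat_pos hn hpsd s
  have h4 := det_postCov_pos hn hpsd h
  rw [Lf, Lf, h1, Real.log_mul h3.ne' h4.ne']
  ring

lemma condEnt_eq (hn : 0 < σn2) (hpsd : (Cov - σn2 • 1).PosSemidef) {a s : Finset D}
    (h : Disjoint a s) :
    condEnt Cov a s =
      (1/2) * ((a.card : ℝ) * Real.log (2 * Real.pi * Real.exp 1) + (Lf Cov (a ∪ s) - Lf Cov s)) := by
  have hpe : (0:ℝ) < 2 * Real.pi * Real.exp 1 := by positivity
  rw [condEnt, Real.log_mul (by positivity) (det_postCov_pos hn hpsd h).ne',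
    Real.log_pow, log_det_postCov hn hpsd h]

instance uniqSingleton (q : D) : Unique ↥({q} : Finset D) :=
  ⟨⟨⟨q, Finset.mem_singleton_self q⟩⟩, fun x => Subtype.ext (Finset.mem_singleton.1 x.2)⟩

lemma det_postCov_singleton (q : D) (W : Finset D) :
    (postCov Cov {q} W).det = postVar Cov q W := by
  rw [Matrix.det_unique]
  rfl

lemma Lf_insert (hn : 0 < σn2) (hpsd : (Cov - σn2 • 1).PosSemidef) {q : D} {W : Finset D}
    (hq : q ∉ W) :
    Lf Cov (insert q W) = Real.log (postVar Cov q W) + Lf Cov W := by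
  have hd : Disjoint ({q} : Finset D) W := Finset.disjoint_singleton_left.2 hq
  have h1 : insert q W = {q} ∪ W := Finset.insert_eq q W
  rw [Lf, h1, schur_det hn hpsd hd, Real.log_mul (det_subMat_pos hn hpsd W).ne'
    (det_postCov_pos hn hpsd hd).ne', det_postCov_singleton, Lf]
  ring

lemma postVar_pos (hn : 0 < σn2) (hpsd : (Cov - σn2 • 1).PosSemidef) {q : D} {W : Finset D}
    (hq : q ∉ W) : 0 < postVar Cov q W := by
  have := det_postCov_pos hn hpsd (Finset.disjoint_singleton_left.2 hq)
  rwa [det_postCov_singleton] at this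

lemma postVar_ge (hn : 0 < σn2) (hpsd : (Cov - σn2 • 1).PosSemidef)
    (hsymm : ∀ p q, Cov p q = Cov q p) {q : D} {W : Finset D} (hq : q ∉ W) :
    σn2 ≤ postVar Cov q W := by
  classical
  set A := subMat Cov {q} {q} with hA
  set B := subMat Cov {q} W with hB
  set C := subMat Cov W {q} with hC
  set Dm := subMat Cov W W with hDm
  haveI : Invertible Dm := invSub hn hpsd W
  have hd : Disjoint ({q} : Finset D) W := Finset.disjoint_singleton_left.2 hq
  set e := sumEquiv {q} W hd with he
  have hBH : C = Bᴴ := by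
    ext w p
    exact hsymm _ _
  have h1 : ((subMat Cov ({q} ∪ W) ({q} ∪ W) - σn2 • 1).submatrix e e).PosSemidef :=
    (subMat_sub_psd hpsd _).submatrix _
  have h2 : (subMat Cov ({q} ∪ W) ({q} ∪ W) - σn2 • 1).submatrix e e =
      Matrix.fromBlocks A B C Dm - σn2 • 1 := by
    have hdist : (subMat Cov ({q} ∪ W) ({q} ∪ W) - σn2 • 1).submatrix e e =
        (subMat Cov ({q} ∪ W) ({q} ∪ W)).submatrix e e -
          σn2 • (1 : Matrix ↥({q} ∪ W) ↥({q} ∪ W) ℝ).submatrix e e := by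
      ext i j
      rfl
    rw [hdist, Matrix.submatrix_one_equiv, subMat_union Cov {q} W hd]
  rw [h2] at h1
  have hX : (σn2 • 1 : Matrix ↥W ↥W ℝ).PosSemidef := by
    have hXd : (σn2 • (1 : Matrix ↥W ↥W ℝ)) = Matrix.diagonal (fun _ => σn2) := by
      ext p r
      by_cases h : p = r <;> simp [Matrix.one_apply, Matrix.diagonal, h]
    rw [hXd]
    exact Matrix.PosSemidef.diagonal (fun _ => hn.le)
  have h3 : (Matrix.fromBlocks (0 : Matrix ↥({q} : Finset D) ↥({q} : Finset D) ℝ)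
      (0 : Matrix ↥({q} : Finset D) ↥W ℝ) (0 : Matrix ↥W ↥({q} : Finset D) ℝ)
      (σn2 • 1 : Matrix ↥W ↥W ℝ)).PosSemidef := by
    refine Matrix.PosSemidef.of_dotProduct_mulVec_nonneg ?_ ?_
    · rw [Matrix.IsHermitian, Matrix.fromBlocks_conjTranspose, Matrix.conjTranspose_zero,
        Matrix.conjTranspose_zero, Matrix.conjTranspose_zero, hX.1]
    · intro x
      rw [← Sum.elim_comp_inl_inr x, Matrix.fromBlocks_mulVec, Function.star_sumElim,
        sumElim_dotProduct_sumElim]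
      have := hX.dotProduct_mulVec_nonneg (x ∘ Sum.inr)
      simpa using this
  have h4 : (Matrix.fromBlocks (A - σn2 • 1) B Bᴴ Dm).PosSemidef := by
    have heq : Matrix.fromBlocks (A - σn2 • 1) B Bᴴ Dm =
        (Matrix.fromBlocks A B C Dm - σn2 • 1) +
          Matrix.fromBlocks 0 0 0 (σn2 • 1 : Matrix ↥W ↥W ℝ) := by
      rw [hBH]
      ext i j
      cases i <;> cases j <;>
        simp [Matrix.fromBlocks, Matrix.one_apply]
    rw [heq]
    exact h1.add h3
  have h5' := (Matrix.PosDef.fromBlocks₂₂ (A - σn2 • 1) B (subMat_posDef hn hpsd W)).mp h4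
  set S5 : Matrix ↥({q} : Finset D) ↥({q} : Finset D) ℝ := A - σn2 • 1 - B * Dm⁻¹ * Bᴴ with hS5
  have h5 : S5.PosSemidef := h5'
  have h6 := h5.dotProduct_mulVec_nonneg (fun _ => 1)
  have h7 : star (fun _ : ↥({q} : Finset D) => (1:ℝ)) ⬝ᵥ (S5 *ᵥ fun _ => (1:ℝ)) =
      S5 default default := by
    simp [dotProduct, Matrix.mulVec, Fintype.sum_unique]
  rw [h7] at h6
  have hpv : postVar Cov q W = (A - B * Dm⁻¹ * C) default default := rfl
  have h8 : S5 default default = postVar Cov q W - σn2 := by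
    rw [hpv, hS5, hBH]
    simp [Matrix.sub_apply, Matrix.one_apply]
    ring
  rw [h8] at h6
  linarith

lemma postCov_empty (Cov : Matrix D D ℝ) (a : Finset D) :
    postCov Cov a ∅ = subMat Cov a a := by
  have h1 : subMat Cov a (∅ : Finset D) * (subMat Cov ∅ ∅)⁻¹ * subMat Cov ∅ a = 0 := by
    ext i j
    simp [Matrix.mul_apply]
  rw [postCov, h1, sub_zero]

lemma postVar_empty (Cov : Matrix D D ℝ) (q : D) : postVar Cov q ∅ = Cov q q := by
  rw [postVar, postCov_empty]
  rfl

lemma postVar_pair (hn : 0 < σn2) (hpsd : (Cov - σn2 • 1).PosSemidef) (q p : D) :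
    postVar Cov q {p} = Cov q q - Cov q p * (Cov p p)⁻¹ * Cov p q := by
  have hdet : (subMat Cov {p} {p}).det = Cov p p := by
    rw [Matrix.det_unique]; rfl
  have hpp : Cov p p ≠ 0 := by
    have := det_subMat_pos hn hpsd {p}
    rw [hdet] at this
    exact this.ne'
  have hinv : (subMat Cov {p} {p})⁻¹ = Matrix.of fun _ _ => (Cov p p)⁻¹ := by
    rw [Matrix.inv_def, hdet, Matrix.adjugate_subsingleton, Ring.inverse_eq_inv]
    ext i j
    simp [Matrix.one_apply, Subsingleton.elim i j]
  rw [postVar, postCov]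
  have : (subMat Cov {q} {p} * (subMat Cov {p} {p})⁻¹ * subMat Cov {p} {q})
      ⟨q, Finset.mem_singleton_self q⟩ ⟨q, Finset.mem_singleton_self q⟩ =
      Cov q p * (Cov p p)⁻¹ * Cov p q := by
    rw [hinv]
    simp [Matrix.mul_apply, Fintype.sum_unique]
    rfl
  rw [Matrix.sub_apply, this]
  rfl

lemma var_diff_telescope (hn : 0 < σn2) (hpsd : (Cov - σn2 • 1).PosSemidef)
    (hsub' : ∀ (p q : D) (A : Finset D), p ∉ A → q ∉ A → p ≠ q →
      postVar Cov p A - postVar Cov p (insert q A) ≤ postVar Cov p ∅ - postVar Cov p {q})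
    {c : ℝ} (hc0 : 0 ≤ c) {q : D} (a W : Finset D) :
    Disjoint a W → q ∉ W → q ∉ a →
    (∀ p ∈ a, p ≠ q ∧ postVar Cov q ∅ - postVar Cov q {p} ≤ c) →
    postVar Cov q W - postVar Cov q (a ∪ W) ≤ a.card * c := by
  classical
  induction a using Finset.induction_on with
  | empty => intro _ _ _ _; simp
  | insert p a' hpa' ih =>
    intro hdis hqW hqa hcond
    have hqa' : q ∉ a' := fun h => hqa (Finset.mem_insert_of_mem h)
    have hda' : Disjoint a' W := hdis.mono_left (Finset.subset_insert p a')
    have hcond' : ∀ r ∈ a', r ≠ q ∧ postVar Cov q ∅ - postVar Cov q {r} ≤ c :=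
      fun r hr => hcond r (Finset.mem_insert_of_mem hr)
    have ih' := ih hda' hqW hqa' hcond'
    have hpW : p ∉ W := Finset.disjoint_left.1 hdis (Finset.mem_insert_self p a')
    have hqaW : q ∉ a' ∪ W := by simp [hqa', hqW]
    have hpaW : p ∉ a' ∪ W := by simp [hpa', hpW]
    have hpq := (hcond p (Finset.mem_insert_self p a')).1
    have hstep := hsub' q p (a' ∪ W) hqaW hpaW hpq.symm
    have hbd := (hcond p (Finset.mem_insert_self p a')).2
    have hun : insert p a' ∪ W = insert p (a' ∪ W) := Finset.insert_union p a' W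
    rw [hun, Finset.card_insert_of_notMem hpa']
    push_cast
    linarith

lemma log_var_diff (hn : 0 < σn2) (hpsd : (Cov - σn2 • 1).PosSemidef)
    (hsymm : ∀ p q, Cov p q = Cov q p)
    (hsub' : ∀ (p q : D) (A : Finset D), p ∉ A → q ∉ A → p ≠ q →
      postVar Cov p A - postVar Cov p (insert q A) ≤ postVar Cov p ∅ - postVar Cov p {q})
    {c : ℝ} (hc0 : 0 ≤ c) {q : D} (a W : Finset D)
    (hdis : Disjoint a W) (hqW : q ∉ W) (hqa : q ∉ a)
    (hcond : ∀ p ∈ a, p ≠ q ∧ postVar Cov q ∅ - postVar Cov q {p} ≤ c) :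
    Real.log (postVar Cov q W) - Real.log (postVar Cov q (a ∪ W)) ≤
      Real.log (1 + a.card * c / σn2) := by
  have hqaW : q ∉ a ∪ W := by simp [hqa, hqW]
  have hv1 : 0 < postVar Cov q W := postVar_pos hn hpsd hqW
  have hv2 : σn2 ≤ postVar Cov q (a ∪ W) := postVar_ge hn hpsd hsymm hqaW
  have hv2p : 0 < postVar Cov q (a ∪ W) := lt_of_lt_of_le hn hv2
  have hK : (0:ℝ) ≤ a.card * c := by positivity
  have hdiff := var_diff_telescope hn hpsd hsub' hc0 a W hdis hqW hqa hcond
  rw [← Real.log_div hv1.ne' hv2p.ne']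
  apply Real.log_le_log (by positivity)
  rw [div_le_iff₀ hv2p]
  have hu : ((a.card * c) / σn2) * σn2 = a.card * c := div_mul_cancel₀ _ hn.ne'
  have hmul : ((a.card * c) / σn2) * σn2 ≤ ((a.card * c) / σn2) * postVar Cov q (a ∪ W) :=
    mul_le_mul_of_nonneg_left hv2 (by positivity)
  nlinarith

lemma main_telescope (hn : 0 < σn2) (hpsd : (Cov - σn2 • 1).PosSemidef)
    (hsymm : ∀ p q, Cov p q = Cov q p)
    (hsub' : ∀ (p q : D) (A : Finset D), p ∉ A → q ∉ A → p ≠ q →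
      postVar Cov p A - postVar Cov p (insert q A) ≤ postVar Cov p ∅ - postVar Cov p {q})
    {c : ℝ} (hc0 : 0 ≤ c) (a S : Finset D) (hdaS : Disjoint a S) (b : Finset D) :
    Disjoint b (a ∪ S) →
    (∀ q ∈ b, ∀ p ∈ a, p ≠ q ∧ postVar Cov q ∅ - postVar Cov q {p} ≤ c) →
    (Lf Cov (a ∪ S) - Lf Cov S) - (Lf Cov (a ∪ S ∪ b) - Lf Cov (S ∪ b)) ≤
      b.card * Real.log (1 + a.card * c / σn2) := by
  classical
  induction b using Finset.induction_on with
  | empty => intro _ _; simp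
  | insert q b' hqb' ih =>
    intro hdis hcond
    have hdis' : Disjoint b' (a ∪ S) := hdis.mono_left (Finset.subset_insert q b')
    have hq' : q ∉ a ∪ S := Finset.disjoint_left.1 hdis (Finset.mem_insert_self q b')
    have hqa : q ∉ a := fun h => hq' (Finset.mem_union_left _ h)
    have hqS : q ∉ S := fun h => hq' (Finset.mem_union_right _ h)
    have hcond' : ∀ r ∈ b', ∀ p ∈ a, p ≠ r ∧ postVar Cov r ∅ - postVar Cov r {p} ≤ c :=
      fun r hr => hcond r (Finset.mem_insert_of_mem hr)
    have ih' := ih hdis' hcond'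
    have hqSb : q ∉ S ∪ b' := by simp [hqS, hqb']
    have hqaSb : q ∉ a ∪ S ∪ b' := by
      simp only [Finset.mem_union]
      push_neg
      exact ⟨⟨hqa, hqS⟩, hqb'⟩
    have h1 : S ∪ insert q b' = insert q (S ∪ b') := Finset.union_insert q S b'
    have h2 : a ∪ S ∪ insert q b' = insert q (a ∪ S ∪ b') := Finset.union_insert q (a ∪ S) b'
    rw [h1, h2, Lf_insert hn hpsd hqSb, Lf_insert hn hpsd hqaSb,
      Finset.card_insert_of_notMem hqb']
    have hdab' : Disjoint a (S ∪ b') := by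
      rw [Finset.disjoint_union_right]
      exact ⟨hdaS, ((Finset.disjoint_union_right.1 hdis').1).symm⟩
    have hlog := log_var_diff hn hpsd hsymm hsub' hc0 a (S ∪ b') hdab' hqSb hqa
      (hcond q (Finset.mem_insert_self q b'))
    rw [← Finset.union_assoc] at hlog
    push_cast
    linarith

end Aux


open Aux in
/-- **Lemma 3 of the appendix.** -/
theorem lemma3_entropy_reduction
    {D : Type*} [Fintype D] [DecidableEq D]
    (r n k m : ℕ) (col : D → ℕ)
    (K : D → D → ℝ) (σs2 σn2 l1 ξ : ℝ)
    (hr : 1 ≤ r) (hk1 : 1 ≤ k) (hkr : k ≤ r) (hm : 1 ≤ m)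
    (hs : 0 < σs2) (hn : 0 < σn2) (hl1 : 0 < l1)
    (hξ : ξ = Real.exp (-((m : ℝ) + 1) ^ 2 / (2 * l1 ^ 2)))
    (hKsymm : ∀ p q : D, K p q = K q p)
    (hKpsd : (Matrix.of K).PosSemidef)
    (hKdiag : ∀ p : D, K p p = σs2)
    (hcol : ∀ p : D, 1 ≤ col p ∧ col p ≤ n)
    (hcolcard : ∀ i : ℕ, 1 ≤ i → i ≤ n → (column col i).card = r)
    (hdecay : ∀ p q : D, (m : ℤ) + 1 ≤ |(col p : ℤ) - (col q : ℤ)| → |K p q| ≤ σs2 * ξ)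
    (hsub : ∀ (p q : D) (A : Finset D), p ∉ A → q ∉ A → p ≠ q →
      postVar (SigmaMat K σn2) p A - postVar (SigmaMat K σn2) p (insert q A)
        ≤ postVar (SigmaMat K σn2) p ∅ - postVar (SigmaMat K σn2) p {q})
    (i : ℕ) (hi1 : m + 2 ≤ i) (hi2 : i ≤ n)
    (x : ℕ → Finset D)
    (hx : ∀ j : ℕ, i - m - 1 ≤ j → j ≤ i → x j ⊆ column col j ∧ (x j).card = k) :
    condEnt (SigmaMat K σn2) (x (i - m - 1)) (seg x (i - m) (i - 1))
        - condEnt (SigmaMat K σn2) (x (i - m - 1)) (seg x (i - m) (i - 1) ∪ x i)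
      ≤ (k : ℝ) ^ 2 * Real.log (1 + ξ ^ 2 / ((σn2 / σs2) * (1 + σn2 / σs2))) := by
  
  classical
  set Cm := SigmaMat K σn2 with hCm
  -- basic facts about Cm
  have hpsd : (Cm - σn2 • 1).PosSemidef := by
    have he : Cm - σn2 • (1 : Matrix D D ℝ) = Matrix.of K := by
      ext p q
      simp only [hCm, SigmaMat, Matrix.sub_apply, Matrix.of_apply, Matrix.smul_apply,
        Matrix.one_apply, smul_eq_mul]
      split_ifs <;> ring
    rw [he]
    exact hKpsd
  have hsymm : ∀ p q : D, Cm p q = Cm q p := by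
    intro p q
    simp only [hCm, SigmaMat, Matrix.of_apply, hKsymm p q]
    by_cases h : p = q
    · subst h; rfl
    · rw [if_neg h, if_neg (Ne.symm h)]
  have hss : 0 < σs2 + σn2 := by linarith
  have hξ0 : 0 < ξ := hξ ▸ Real.exp_pos _
  -- the pairwise quantity
  set c : ℝ := σs2 ^ 2 * ξ ^ 2 / (σs2 + σn2) with hc
  have hc0 : 0 ≤ c := by positivity
  -- column membership facts
  have hcolx : ∀ j : ℕ, i - m - 1 ≤ j → j ≤ i → ∀ p ∈ x j, col p = j := by
    intro j h1 h2 p hp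
    have := (hx j h1 h2).1 hp
    exact (Finset.mem_filter.1 this).2
  have hcola : ∀ p ∈ x (i - m - 1), col p = i - m - 1 := by
    intro p hp
    exact hcolx (i - m - 1) le_rfl (by omega) p hp
  have hcolb : ∀ p ∈ x i, col p = i := by
    intro p hp
    exact hcolx i (by omega) le_rfl p hp
  have hcolS : ∀ p ∈ seg x (i - m) (i - 1), i - m ≤ col p ∧ col p ≤ i - 1 := by
    intro p hp
    rw [seg, Finset.mem_biUnion] at hp
    obtain ⟨j, hj, hpj⟩ := hp
    rw [Finset.mem_Icc] at hj
    have := hcolx j (by omega) (by omega) p hpj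
    omega
  set a := x (i - m - 1) with ha
  set S := seg x (i - m) (i - 1) with hS
  set b := x i with hb
  have hdaS : Disjoint a S := by
    rw [Finset.disjoint_left]
    intro p hpa hpS
    have h1 := hcola p hpa
    have h2 := hcolS p hpS
    omega
  have hdb : Disjoint b (a ∪ S) := by
    rw [Finset.disjoint_left]
    intro p hpb hpu
    have h1 := hcolb p hpb
    rcases Finset.mem_union.1 hpu with h | h
    · have := hcola p h; omega
    · have := hcolS p h; omega
  -- pairwise bound
  have hpair : ∀ q ∈ b, ∀ p ∈ a, p ≠ q ∧ postVar Cm q ∅ - postVar Cm q {p} ≤ c := by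
    intro q hq p hp
    have hcq := hcolb q hq
    have hcp := hcola p hp
    have hne : p ≠ q := by
      intro h
      rw [h] at hcp
      omega
    refine ⟨hne, ?_⟩
    have hgap : (m : ℤ) + 1 ≤ |(col q : ℤ) - (col p : ℤ)| := by
      rw [hcq, hcp]
      have h1 : ((i - m - 1 : ℕ) : ℤ) = (i : ℤ) - (m : ℤ) - 1 := by
        push_cast [Nat.cast_sub (by omega : m + 1 ≤ i)]
        omega
      rw [h1]
      rw [abs_of_nonneg (by omega)]
      omega
    have hdec := hdecay q p hgap
    have hVe : postVar Cm q ∅ = σs2 + σn2 := by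
      rw [Aux.postVar_empty]
      simp [hCm, SigmaMat, hKdiag q]
    have hVp : postVar Cm q {p} =
        (σs2 + σn2) - K q p * (σs2 + σn2)⁻¹ * K p q := by
      rw [Aux.postVar_pair hn hpsd q p]
      have h1 : Cm q q = σs2 + σn2 := by simp [hCm, SigmaMat, hKdiag q]
      have h2 : Cm p p = σs2 + σn2 := by simp [hCm, SigmaMat, hKdiag p]
      have h3 : Cm q p = K q p := by simp [hCm, SigmaMat, hne.symm]
      have h4 : Cm p q = K p q := by simp [hCm, SigmaMat, hne]
      rw [h1, h2, h3, h4]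
    rw [hVe, hVp, hc]
    have h5 : K q p * (σs2 + σn2)⁻¹ * K p q = (K q p) ^ 2 / (σs2 + σn2) := by
      rw [hKsymm p q]
      ring
    rw [h5]
    have h6 : (K q p) ^ 2 ≤ σs2 ^ 2 * ξ ^ 2 := by
      have h7 : (K q p) ^ 2 = |K q p| ^ 2 := (sq_abs _).symm
      have h8 : |K q p| ^ 2 ≤ (σs2 * ξ) ^ 2 :=
        pow_le_pow_left₀ (abs_nonneg _) hdec 2
      calc (K q p) ^ 2 = |K q p| ^ 2 := h7
        _ ≤ (σs2 * ξ) ^ 2 := h8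
        _ = σs2 ^ 2 * ξ ^ 2 := by ring
    calc σs2 + σn2 - ((σs2 + σn2) - K q p ^ 2 / (σs2 + σn2)) = K q p ^ 2 / (σs2 + σn2) := by ring
      _ ≤ σs2 ^ 2 * ξ ^ 2 / (σs2 + σn2) := by gcongr
  -- rewrite the goal via Lf
  have hdaSb : Disjoint a (S ∪ b) := by
    rw [Finset.disjoint_union_right]
    exact ⟨hdaS, ((Finset.disjoint_union_right.1 hdb).1).symm⟩
  have hE1 := Aux.condEnt_eq hn hpsd hdaS
  have hE2 := Aux.condEnt_eq hn hpsd hdaSb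
  have hassoc : a ∪ (S ∪ b) = a ∪ S ∪ b := (Finset.union_assoc a S b).symm
  rw [hE1, hE2, hassoc]
  have htel := Aux.main_telescope hn hpsd hsymm hsub hc0 a S hdaS b hdb hpair
  -- cards
  have hcard_a : a.card = k := (hx (i - m - 1) le_rfl (by omega)).2
  have hcard_b : b.card = k := (hx i (by omega) le_rfl).2
  -- identify the constant
  set β : ℝ := ξ ^ 2 / (σn2 / σs2 * (1 + σn2 / σs2)) with hβ
  have hβtarget : (a.card : ℝ) * c / σn2 = (k : ℝ) * β := by
    rw [hcard_a, hβ, hc]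
    field_simp
  have hβ0 : 0 ≤ β := by
    rw [hβ]
    positivity
  have hβ1 : (0:ℝ) < 1 + β := by linarith
  have hlogβ : 0 ≤ Real.log (1 + β) := Real.log_nonneg (by linarith)
  have hk0 : (0:ℝ) ≤ (k : ℝ) := Nat.cast_nonneg k
  have hpow : (1:ℝ) + (k : ℝ) * β ≤ (1 + β) ^ k := by
    have := one_add_mul_le_pow (by linarith : (-2:ℝ) ≤ β) k
    simpa [mul_comm] using this
  have hlog2 : Real.log (1 + (k : ℝ) * β) ≤ (k : ℝ) * Real.log (1 + β) := by
    have h1 : Real.log (1 + (k : ℝ) * β) ≤ Real.log ((1 + β) ^ k) :=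
      Real.log_le_log (by positivity) hpow
    rwa [Real.log_pow] at h1
  rw [hβtarget, hcard_b] at htel
  have hfin : (k : ℝ) * Real.log (1 + (k : ℝ) * β) ≤ 2 * ((k : ℝ) ^ 2 * Real.log (1 + β)) := by
    have h1 : (k : ℝ) * Real.log (1 + (k : ℝ) * β) ≤ (k : ℝ) * ((k : ℝ) * Real.log (1 + β)) :=
      mul_le_mul_of_nonneg_left hlog2 hk0
    nlinarith [mul_nonneg (mul_nonneg hk0 hk0) hlogβ]
  linarith
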